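/- arXiv:2102.01440 — 6 statements merged into one kernel-verified Lean document; each statement's English description precedes it below -/
import Mathlib

section
/- Let J = (V, D, H) be a weakly winning justification for a parity game PG. Then every finite path in D starting in a node v and ending in an unjustified node is a play of the parametrized parity game PG_{P_J} won by H(v). -/
attribute [local instance] Classical.propDecidable

noncomputable section

open Fin.NatCast

/-- A parity game: an edge relation `E`, an owner function, a priority
function; every node has at least one outgoing edge. -/
structure ParityGame (V : Type*) where
  E : V → V → Prop
  owner : V → Fin 2
  pr : V → ℕ
  exists_succ : ∀ v, ∃ w, E v w

namespace ParityGame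

variable {V : Type*}

/-- An infinite sequence of nodes following the relation `R`. -/
def IsInfPath (R : V → V → Prop) (π : ℕ → V) : Prop :=
  ∀ i, R (π i) (π (i + 1))

/-- `ρ 0, …, ρ n` is a finite sequence of nodes following `R`. -/
def IsFinPath (R : V → V → Prop) (ρ : ℕ → V) (n : ℕ) : Prop :=
  ∀ i < n, R (ρ i) (ρ (i + 1))

/-- A cycle following `R`: a nonempty finite path ending in its starting node. -/
def IsCycle (R : V → V → Prop) (ρ : ℕ → V) (n : ℕ) : Prop :=
  0 < n ∧ IsFinPath R ρ n ∧ ρ n = ρ 0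

/-- `w` is reachable from `v` following `R` (in zero or more steps). -/
def Reaches (R : V → V → Prop) (v w : V) : Prop :=
  Relation.ReflTransGen R v w

/-- The infinite play `π` is won by player `α`: the highest priority
occurring infinitely often in the play has parity `α`. -/
def InfWonBy (G : ParityGame V) (π : ℕ → V) (α : Fin 2) : Prop :=
  ∃ p : ℕ, {i | G.pr (π i) = p}.Infinite ∧
    (∀ q : ℕ, {i | G.pr (π i) = q}.Infinite → q ≤ p) ∧ (p : Fin 2) = α

/-- A play is consistent with a (partial, memoryless) strategy given as a set
of edges: whenever the play is at a node where the strategy selects an edge,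
the play follows that edge. -/
def Consistent (σ : V → V → Prop) (π : ℕ → V) : Prop :=
  ∀ i u, σ (π i) u → π (i + 1) = u

/-- Consistency of a finite play `ρ 0, …, ρ n` with a strategy. -/
def ConsistentFin (σ : V → V → Prop) (ρ : ℕ → V) (n : ℕ) : Prop :=
  ∀ i < n, ∀ u, σ (ρ i) u → ρ (i + 1) = u

/-- The default hypothesis: each node is won by the parity of its priority. -/
def Hd (G : ParityGame V) (v : V) : Fin 2 := (G.pr v : Fin 2)

/-- `dj` is a direct justification for player `α` to win node `v`: a set
containing exactly one outgoing edge of `v` if `α` owns `v`, and all outgoing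
edges of `v` otherwise. -/
def IsDJ (G : ParityGame V) (v : V) (α : Fin 2) (dj : Set (V × V)) : Prop :=
  (G.owner v = α → ∃ w, G.E v w ∧ dj = {(v, w)}) ∧
  (G.owner v ≠ α → dj = {p | p.1 = v ∧ G.E v p.2})

/-- `dj` wins `v` for `α` under hypothesis `H`. -/
def WinsDJ (G : ParityGame V) (H : V → Fin 2) (v : V) (α : Fin 2)
    (dj : Set (V × V)) : Prop :=
  G.IsDJ v α dj ∧ ∀ p ∈ dj, H p.2 = α

/-- The parity game obtained from `G` and the parameter function `P` by
replacing, in every parameter `v`, the outgoing edges of `v` by the self-loop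
`(v, v)` and the priority of `v` by its assigned winner `P v`. -/
def paramGame (G : ParityGame V) (P : V → Option (Fin 2)) : ParityGame V where
  E := fun v w => if P v = none then G.E v w else w = v
  owner := G.owner
  pr := fun v => (P v).elim (G.pr v) Fin.val
  exists_succ := fun v => by
    by_cases h : P v = none
    · obtain ⟨w, hw⟩ := G.exists_succ v
      exact ⟨w, by simp [h, hw]⟩
    · exact ⟨v, by simp [h]⟩

/-- A justification for `G`: a subgraph `D` together with a hypothesis `H`. -/
structure Justification (G : ParityGame V) where
  D : V → V → Prop
  H : V → Fin 2

variable {G : ParityGame V}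

namespace Justification

/-- `v` is justified in `J`: it has an outgoing edge in `D`. -/
def Justified (J : Justification G) (v : V) : Prop := ∃ w, J.D v w

/-- The set of outgoing edges of `v` in `D`. -/
def outEdges (J : Justification G) (v : V) : Set (V × V) :=
  {p | p.1 = v ∧ J.D v p.2}

/-- `J` is weakly winning: the outgoing edges of every justified node `v`
form a direct justification winning `v` for `H v` under `H`. -/
def WeaklyWinning (J : Justification G) : Prop :=
  ∀ v, J.Justified v → G.WinsDJ J.H v (J.H v) (J.outEdges v)

/-- `J` is winning: weakly winning, and every infinite path in `D` is a play
of `G` won by the hypothetical winner of its nodes. -/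
def Winning (J : Justification G) : Prop :=
  J.WeaklyWinning ∧
    ∀ π : ℕ → V, IsInfPath J.D π → G.InfWonBy π (J.H (π 0))

/-- The parameter function `P_J`: the restriction of `H` to the unjustified
nodes of `J`. -/
def param (J : Justification G) (v : V) : Option (Fin 2) :=
  if J.Justified v then none else some (J.H v)

/-- The strategy `σ_{J,α}`: the set of edges `(v, w) ∈ D` with
`O v = H v = α`. -/
def strat (J : Justification G) (α : Fin 2) : V → V → Prop :=
  fun v w => J.D v w ∧ G.owner v = α ∧ J.H v = α

/-- `Par_J v`: the parameters (unjustified nodes) reachable from `v` in `D`. -/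
def Par (J : Justification G) (v : V) : Set V :=
  {w | Reaches J.D v w ∧ ¬ J.Justified w}

/-- The justification level of `v`: the minimal priority of a parameter
reachable from `v`, and `⊤` (`+∞`) if there is none. -/
def jl (J : Justification G) (v : V) : ℕ∞ :=
  sInf ((fun w => (G.pr w : ℕ∞)) '' J.Par v)

/-- The justification level of a direct justification: the minimum of the
justification levels of the targets of its edges. -/
def jlDJ (J : Justification G) (dj : Set (V × V)) : ℕ∞ :=
  sInf ((fun p : V × V => J.jl p.2) '' dj)

/-- `J` is safe: winning, unjustified nodes have their default winner as
hypothesis, and the justification level of every node is at least its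
priority. -/
def Safe (J : Justification G) : Prop :=
  J.Winning ∧ (∀ v, ¬ J.Justified v → J.H v = G.Hd v) ∧
    ∀ v, (G.pr v : ℕ∞) ≤ J.jl v

/-- `J[v : dj, α]`: replace the outgoing `D`-edges of `v` by `dj` and set
`H v := α`. -/
def update (J : Justification G) (v : V) (dj : Set (V × V)) (α : Fin 2) :
    Justification G where
  D := fun x y => if x = v then (x, y) ∈ dj else J.D x y
  H := fun x => if x = v then α else J.H x

/-- `J[v : ∅, Hf v | v ∈ S]`: remove the direct justification of every
`v ∈ S` and set `H v := Hf v`. -/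
def resetAll (J : Justification G) (S : Set V) (Hf : V → Fin 2) :
    Justification G where
  D := fun x y => if x ∈ S then False else J.D x y
  H := fun x => if x ∈ S then Hf x else J.H x

/-- `s_i(J)`: the number of justified nodes of justification level `i`. -/
def size (J : Justification G) (i : ℕ∞) : ℕ :=
  {v | J.Justified v ∧ J.jl v = i}.ncard

end Justification

/-- The preconditions of the operation `Justify(J, v, dj)`. -/
def Executable (G : ParityGame V) (J : Justification G) (v : V)
    (dj : Set (V × V)) : Prop :=
  J.Safe ∧ (∃ α, G.WinsDJ J.H v α dj) ∧
    (if J.Justified v then J.jl v < J.jlDJ dj else J.jl v ≤ J.jlDJ dj)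

/-- The operation `Justify(J, v, dj)`, where `α` is the player winning `v`
by `dj`: if `H v = α` this is `J[v : dj, α]`; otherwise all nodes reaching
`v` in `D` are reset to their default winner and then `v` gets `dj`. -/
def justify (G : ParityGame V) (J : Justification G) (v : V)
    (dj : Set (V × V)) (α : Fin 2) : Justification G :=
  if J.H v = α then J.update v dj α
  else (J.resetAll {w | Reaches J.D w v} G.Hd).update v dj α

/-- The empty justification `(V, ∅, H_d)`. -/
def Justification.empty (G : ParityGame V) : Justification G :=
  ⟨fun _ _ => False, G.Hd⟩

/-- for a weakly winning justification `J`, every finite path in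
`D` starting in `v` and ending in an unjustified node is a play of the
parametrized parity game `PG_{P_J}` won by `H v`: it follows `E`, all its
nodes except the last are non-parameters, and it halts in a parameter whose
assigned winner is `H v`. -/
theorem stmt_2 {V : Type*} [Fintype V] {G : ParityGame V}
    (J : Justification G) (hJ : J.WeaklyWinning) (ρ : ℕ → V) (n : ℕ)
    (hpath : IsFinPath J.D ρ n) (hlast : ¬ J.Justified (ρ n)) :
    IsFinPath G.E ρ n ∧ (∀ i < n, J.param (ρ i) = none) ∧
      J.param (ρ n) = some (J.H (ρ 0)) := by
  have key : ∀ v w, J.D v w → G.E v w ∧ J.H w = J.H v := by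
    intro v w hvw
    have hjust : J.Justified v := ⟨w, hvw⟩
    obtain ⟨⟨h1, h2⟩, hwin⟩ := hJ v hjust
    have hmem : (v, w) ∈ J.outEdges v := ⟨rfl, hvw⟩
    constructor
    · by_cases ho : G.owner v = J.H v
      · obtain ⟨u, hu, heq⟩ := h1 ho
        rw [heq] at hmem
        simp only [Set.mem_singleton_iff, Prod.mk.injEq] at hmem
        exact hmem.2 ▸ hu
      · have heq := h2 ho
        rw [heq] at hmem
        exact hmem.2
    · exact hwin _ hmem
  have hE : IsFinPath G.E ρ n := fun i hi => (key _ _ (hpath i hi)).1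
  have hH : ∀ i ≤ n, J.H (ρ i) = J.H (ρ 0) := by
    intro i hi
    induction i with
    | zero => rfl
    | succ k ih =>
      have hk : k < n := Nat.lt_of_succ_le hi
      rw [(key _ _ (hpath k hk)).2, ih (le_of_lt hk)]
  refine ⟨hE, ?_, ?_⟩
  · intro i hi
    have : J.Justified (ρ i) := ⟨ρ (i + 1), hpath i hi⟩
    simp [Justification.param, this]
  · simp [Justification.param, hlast, hH n le_rfl]

end ParityGame

end
end

section
/- Let J = (V, D, H) be a winning justification for a parity game PG. Then for every node v, every play of the parametrized parity game PG_{P_J} starting in v that is consistent with the strategy σ_{J,H(v)} is won by H(v). Consequently H is the winning function of PG_{P_J}: for every node v, player H(v) has a winning strategy for v in PG_{P_J}, namely σ_{J,H(v)}. -/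
attribute [local instance] Classical.propDecidable

noncomputable section

open Fin.NatCast

namespace ParityGame

variable {V : Type*}

variable {G : ParityGame V}

lemma param_none_justified {V : Type*} {G : ParityGame V} (J : Justification G)
    {v : V} (h : J.param v = none) : J.Justified v := by
  by_contra hc
  simp [Justification.param, hc] at h

lemma step_aux {V : Type*} {G : ParityGame V} (J : Justification G)
    (hW : J.WeaklyWinning) {u w : V} (hu : J.Justified u) (hE : G.E u w)
    (hcons : ∀ x, J.strat (J.H u) u x → w = x) :
    J.D u w ∧ J.H w = J.H u := by
  obtain ⟨⟨h1, h2⟩, hwin⟩ := hW u hu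
  by_cases ho : G.owner u = J.H u
  · obtain ⟨w₀, hEw₀, heq⟩ := h1 ho
    obtain ⟨y, hy⟩ := hu
    have hy' : ((u, y) : V × V) ∈ J.outEdges u := ⟨rfl, hy⟩
    rw [heq] at hy'
    have hyw : y = w₀ := by simpa [Prod.ext_iff] using hy'
    subst hyw
    have hwy : w = y := hcons y ⟨hy, ho, rfl⟩
    subst hwy
    exact ⟨hy, hwin (u, w) (by rw [heq]; rfl)⟩
  · have heq := h2 ho
    have hmem : ((u, w) : V × V) ∈ J.outEdges u := by
      rw [heq]; exact ⟨rfl, hE⟩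
    exact ⟨hmem.2, hwin (u, w) hmem⟩

/-- for a winning justification `J` and node `v`, every
(infinite or finite) play of `PG_{P_J}` starting in `v` and consistent with
`σ_{J, H v}` is won by `H v`; hence `H` is the winning function of
`PG_{P_J}` and `σ_{J, H v}` is a winning strategy for `v`. -/
theorem stmt_5 {V : Type*} [Fintype V] {G : ParityGame V}
    (J : Justification G) (hJ : J.Winning) (v : V) :
    (∀ π : ℕ → V, π 0 = v → IsInfPath G.E π → (∀ i, J.param (π i) = none) →
      Consistent (J.strat (J.H v)) π → G.InfWonBy π (J.H v)) ∧
    (∀ (ρ : ℕ → V) (n : ℕ), ρ 0 = v → IsFinPath G.E ρ n →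
      (∀ i < n, J.param (ρ i) = none) → ConsistentFin (J.strat (J.H v)) ρ n →
      ∀ β : Fin 2, J.param (ρ n) = some β → β = J.H v) := by
  constructor
  · intro π h0 hpath hparam hcons
    have hH : ∀ i, J.H (π i) = J.H v := by
      intro i
      induction i with
      | zero => rw [h0]
      | succ i ih =>
        have hstep := step_aux J hJ.1 (param_none_justified J (hparam i))
          (hpath i) (fun x hx => by
            rw [ih] at hx
            exact hcons i x hx)
        rw [hstep.2, ih]
    have hD : IsInfPath J.D π := by
      intro i
      exact (step_aux J hJ.1 (param_none_justified J (hparam i)) (hpath i)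
        (fun x hx => by
          rw [hH i] at hx
          exact hcons i x hx)).1
    have := hJ.2 π hD
    rwa [h0] at this
  · intro ρ n h0 hpath hparam hcons β hβ
    have hH : ∀ i ≤ n, J.H (ρ i) = J.H v := by
      intro i hi
      induction i with
      | zero => rw [h0]
      | succ i ih =>
        have hi' : i < n := Nat.lt_of_succ_le hi
        have ihi := ih (le_of_lt hi')
        have hstep := step_aux J hJ.1 (param_none_justified J (hparam i hi'))
          (hpath i hi') (fun x hx => by
            rw [ihi] at hx
            exact hcons i hi' x hx)
        rw [hstep.2, ihi]
    have hnj : ¬ J.Justified (ρ n) := by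
      intro hjust
      simp [Justification.param, hjust] at hβ
    have : J.param (ρ n) = some (J.H (ρ n)) := by
      simp [Justification.param, hnj]
    rw [this] at hβ
    rw [← Option.some_inj.mp hβ, hH n le_rfl]

end ParityGame

end
end

section
/- Let J = (V, D, H) be a weakly winning justification, v a node with H(v) = ᾱ that has no incoming edges in D, and dj a direct justification that wins v for α under H. Then J' = J[v : dj, α] is weakly winning and no cycle in J' contains an edge of dj. -/
attribute [local instance] Classical.propDecidable

open Fin.NatCast

noncomputable section

namespace ParityGame

variable {V : Type*}

variable {G : ParityGame V}

/-- if `J` is weakly winning, `H v = ᾱ`, `v` has no incoming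
edges in `D`, and `dj` wins `v` for `α` under `H`, then `J[v : dj, α]` is
weakly winning and no cycle of `J[v : dj, α]` contains an edge of `dj`. -/
theorem stmt_6 {V : Type*} [Fintype V] {G : ParityGame V}
    (J : Justification G) (hJ : J.WeaklyWinning) (v : V) (α : Fin 2)
    (dj : Set (V × V)) (hHv : J.H v = 1 - α) (hnoin : ∀ w, ¬ J.D w v)
    (hwin : G.WinsDJ J.H v α dj) :
    (J.update v dj α).WeaklyWinning ∧
    ∀ (ρ : ℕ → V) (n : ℕ), IsCycle (J.update v dj α).D ρ n →
      ∀ i < n, (ρ i, ρ (i + 1)) ∉ dj := by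
  have hαne : (1 - α : Fin 2) ≠ α := by fin_cases α <;> decide
  -- every edge in dj starts at v
  have hfst : ∀ p ∈ dj, p.1 = v := by
    intro p hp
    rcases hwin.1 with ⟨h1, h2⟩
    by_cases ho : G.owner v = α
    · obtain ⟨w, _, hdj⟩ := h1 ho
      rw [hdj] at hp; rw [hp]
    · rw [h2 ho] at hp; exact hp.1
  have hdjout : (J.update v dj α).outEdges v = dj := by
    ext p
    constructor
    · rintro ⟨hp1, hp2⟩
      simp only [Justification.update, if_pos rfl] at hp2
      have : p = (v, p.2) := Prod.ext hp1 rfl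
      rw [this]; exact hp2
    · intro hp
      refine ⟨hfst p hp, ?_⟩
      simp only [Justification.update, if_pos rfl]
      have : (v, p.2) = p := Prod.ext (hfst p hp).symm rfl
      rw [this]; exact hp
  constructor
  · intro u hu
    by_cases huv : u = v
    · subst huv
      have hH : (J.update u dj α).H u = α := by
        simp [Justification.update]
      rw [hH, hdjout]
      refine ⟨hwin.1, ?_⟩
      intro p hp
      simp only [Justification.update]
      by_cases h : p.2 = u
      · simp [h]
      · simp only [if_neg h]; exact hwin.2 p hp
    · have houtEq : (J.update v dj α).outEdges u = J.outEdges u := by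
        ext p
        simp [Justification.outEdges, Justification.update, huv]
      have hjust : J.Justified u := by
        obtain ⟨w, hw⟩ := hu
        simp only [Justification.update, if_neg huv] at hw
        exact ⟨w, hw⟩
      have hw := hJ u hjust
      have hH : (J.update v dj α).H u = J.H u := by
        simp [Justification.update, huv]
      rw [hH, houtEq]
      refine ⟨hw.1, ?_⟩
      intro p hp
      have hp2v : p.2 ≠ v := by
        intro h
        rcases hp with ⟨hp1, hpD⟩
        rw [h] at hpD
        exact hnoin u hpD
      simp only [Justification.update, if_neg hp2v]
      exact hw.2 p hp
  · rintro ρ n ⟨hn, hpath, hcyc⟩ i hi hin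
    have hρi : ρ i = v := hfst _ hin
    -- find an edge of the cycle ending at v
    have : ∃ k < n, ρ (k + 1) = v ∧ (J.update v dj α).D (ρ k) (ρ (k + 1)) := by
      rcases Nat.eq_zero_or_pos i with h0 | hpos
      · refine ⟨n - 1, by omega, ?_, ?_⟩
        · rw [Nat.sub_add_cancel hn, hcyc, ← h0, hρi]
        · exact hpath _ (by omega)
      · refine ⟨i - 1, by omega, ?_, ?_⟩
        · rw [Nat.sub_add_cancel hpos, hρi]
        · exact hpath _ (by omega)
    obtain ⟨k, hk, hk1, hkD⟩ := this
    by_cases hkv : ρ k = v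
    · simp only [Justification.update, hkv, if_pos rfl, hk1] at hkD
      have := hwin.2 (v, v) hkD
      rw [hHv] at *
      exact hαne (by simpa using this)
    · simp only [Justification.update, if_neg hkv, hk1] at hkD
      exact hnoin _ hkD

end ParityGame

end
end

section
/- Let J = (V, D, H) be a safe justification, v an unjustified node, and dj a direct justification that wins v for H(v) under H with jl(dj) ≥ jl(v). Then in J' = J[v : dj, H(v)], every cycle that contains an edge of dj passes through v, every node n on such a cycle satisfies Pr(n) ≤ Pr(v), and hence the winner of every such cycle (the parity of the highest priority on it) is H(v). -/
attribute [local instance] Classical.propDecidable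

noncomputable section

open Fin.NatCast

namespace ParityGame

variable {V : Type*}

variable {G : ParityGame V}

/-- if `J` is safe, `v` is unjustified, and `dj` wins `v` for
`H v` under `H` with `jl(dj) ≥ jl(v)`, then in `J[v : dj, H v]` every cycle
containing an edge of `dj` passes through `v`, all its nodes have priority
`≤ Pr v`, and the winner of the cycle (the parity of the highest priority on
it) is `H v`. -/
theorem stmt_10 {V : Type*} [Fintype V] {G : ParityGame V}
    (J : Justification G) (hJ : J.Safe) (v : V) (dj : Set (V × V))
    (hunj : ¬ J.Justified v) (hwin : G.WinsDJ J.H v (J.H v) dj)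
    (hlev : J.jl v ≤ J.jlDJ dj) :
    ∀ (ρ : ℕ → V) (n : ℕ), IsCycle (J.update v dj (J.H v)).D ρ n →
      (∃ i < n, (ρ i, ρ (i + 1)) ∈ dj) →
      (∃ i < n, ρ i = v) ∧ (∀ i ≤ n, G.pr (ρ i) ≤ G.pr v) ∧
        ((((Finset.range (n + 1)).sup fun i => G.pr (ρ i) : ℕ) : Fin 2)
          = J.H v) := by
  intro ρ n hcycle hdjedge
  obtain ⟨hn, hpath, hcyc⟩ := hcycle
  -- every edge in dj starts at v
  have hdjfst : ∀ p ∈ dj, p.1 = v := by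
    intro p hp
    by_cases ho : G.owner v = J.H v
    · obtain ⟨w, _, hdj⟩ := hwin.1.1 ho
      rw [hdj] at hp
      simp only [Set.mem_singleton_iff] at hp
      rw [hp]
    · have hdj := hwin.1.2 ho
      rw [hdj] at hp
      exact hp.1
  -- the cycle passes through v
  obtain ⟨j0, hj0n, hj0dj⟩ := hdjedge
  have hj0v : ρ j0 = v := hdjfst _ hj0dj
  -- helper: following update-edges until reaching v gives reachability in J.D
  have reach : ∀ m (σ : ℕ → V) i,
      (∀ k, i ≤ k → k < i + m → (J.update v dj (J.H v)).D (σ k) (σ (k+1))) →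
      σ (i + m) = v → Relation.ReflTransGen J.D (σ i) v := by
    intro m
    induction m with
    | zero =>
      intro σ i _ hv
      simp only [Nat.add_zero] at hv
      rw [hv]
    | succ m ih =>
      intro σ i hE hv
      by_cases h : σ i = v
      · rw [h]
      · have e : J.D (σ i) (σ (i+1)) := by
          have h1 := hE i le_rfl (by omega)
          simp only [Justification.update, if_neg h] at h1
          exact h1
        have heq : i + 1 + m = i + (m + 1) := by omega
        have tail := ih σ (i+1) (fun k hk1 hk2 => hE k (by omega) (by omega))
          (by rw [heq]; exact hv)
        exact Relation.ReflTransGen.head e tail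
  -- the doubled path
  set σ : ℕ → V := fun k => if k ≤ n then ρ k else ρ (k - n) with hσdef
  have hσE : ∀ k, k < 2 * n → (J.update v dj (J.H v)).D (σ k) (σ (k+1)) := by
    intro k hk
    by_cases h1 : k < n
    · have e1 : σ k = ρ k := if_pos (le_of_lt h1)
      have e2 : σ (k+1) = ρ (k+1) := if_pos (by omega)
      rw [e1, e2]
      exact hpath k h1
    · have e2 : σ (k+1) = ρ (k+1-n) := if_neg (by omega)
      by_cases h3 : k = n
      · have e1 : σ k = ρ 0 := by
          subst h3
          show (if k ≤ k then ρ k else ρ (k - k)) = ρ 0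
          rw [if_pos le_rfl, hcyc]
        have e3 : k + 1 - n = 1 := by omega
        rw [e1, e2, e3]
        exact hpath 0 hn
      · have e1 : σ k = ρ (k - n) := if_neg (by omega)
        have e3 : k + 1 - n = (k - n) + 1 := by omega
        rw [e1, e2, e3]
        exact hpath (k - n) (by omega)
  -- every node on the cycle reaches v in J.D
  have hreachv : ∀ i, i ≤ n → Relation.ReflTransGen J.D (ρ i) v := by
    intro i hi
    set j : ℕ := if i ≤ j0 then j0 else j0 + n with hjdef
    have hij : i ≤ j := by
      by_cases h : i ≤ j0
      · simpa [hjdef, h] using h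
      · simp only [hjdef, if_neg h]; omega
    have hjlt : j ≤ j0 + n := by
      by_cases h : i ≤ j0 <;> simp [hjdef, h] <;> omega
    have hσj : σ j = v := by
      by_cases h : i ≤ j0
      · have : j = j0 := by simp [hjdef, h]
        rw [this]
        have : σ j0 = ρ j0 := if_pos (by omega)
        rw [this, hj0v]
      · have hjv : j = j0 + n := by simp [hjdef, h]
        by_cases h0 : j0 = 0
        · have hjn : j = n := by omega
          have : σ j = ρ j := if_pos (by omega)
          rw [this, hjn, hcyc, ← h0, hj0v]
        · have : σ j = ρ (j - n) := if_neg (by omega)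
          rw [this]
          have : j - n = j0 := by omega
          rw [this, hj0v]
    have hσi : σ i = ρ i := if_pos hi
    have hm : i + (j - i) = j := by omega
    have := reach (j - i) σ i (fun k hk1 hk2 => hσE k (by omega)) (by rw [hm]; exact hσj)
    rwa [hσi] at this
  -- priority bound
  have hpr : ∀ i, i ≤ n → G.pr (ρ i) ≤ G.pr v := by
    intro i hi
    have hv_par : v ∈ J.Par (ρ i) := ⟨hreachv i hi, hunj⟩
    have h1 : J.jl (ρ i) ≤ (G.pr v : ℕ∞) := sInf_le ⟨v, hv_par, rfl⟩
    have h2 : (G.pr (ρ i) : ℕ∞) ≤ J.jl (ρ i) := hJ.2.2 (ρ i)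
    exact_mod_cast h2.trans h1
  refine ⟨⟨j0, hj0n, hj0v⟩, hpr, ?_⟩
  have hsup : ((Finset.range (n+1)).sup fun i => G.pr (ρ i)) = G.pr v := by
    apply le_antisymm
    · exact Finset.sup_le fun i hi => hpr i (Nat.lt_succ_iff.mp (Finset.mem_range.mp hi))
    · have hmem : j0 ∈ Finset.range (n+1) := Finset.mem_range.mpr (by omega)
      have := Finset.le_sup (f := fun i => G.pr (ρ i)) hmem
      simpa [hj0v] using this
  rw [hsup]
  exact (hJ.2.1 v hunj).symm

end ParityGame

end
end

section
/- If the operation Justify(J, v, dj) is executable, then the justification it returns is a safe justification. -/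
attribute [local instance] Classical.propDecidable

open Fin.NatCast

noncomputable section

namespace ParityGame

variable {V : Type*}

variable {G : ParityGame V}

/-! ### Auxiliary lemmas for Statement 12 -/

section Aux

lemma IsDJ.fst_eq {v : V} {α : Fin 2} {dj : Set (V × V)} (h : G.IsDJ v α dj)
    {p : V × V} (hp : p ∈ dj) : p.1 = v := by
  by_cases ho : G.owner v = α
  · obtain ⟨w, _, rfl⟩ := h.1 ho
    rw [Set.mem_singleton_iff] at hp
    rw [hp]
  · rw [h.2 ho] at hp
    exact hp.1

lemma IsDJ.nonempty {v : V} {α : Fin 2} {dj : Set (V × V)} (h : G.IsDJ v α dj) :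
    dj.Nonempty := by
  by_cases ho : G.owner v = α
  · obtain ⟨w, _, rfl⟩ := h.1 ho
    exact ⟨(v, w), rfl⟩
  · obtain ⟨w, hw⟩ := G.exists_succ v
    rw [h.2 ho]
    exact ⟨(v, w), rfl, hw⟩

namespace Justification

variable {J : Justification G} {v : V} {dj : Set (V × V)} {α : Fin 2}

lemma hEdge (hw : J.WeaklyWinning) {x y : V} (h : J.D x y) : J.H y = J.H x :=
  (hw x ⟨y, h⟩).2 (x, y) ⟨rfl, h⟩

lemma hReaches (hw : J.WeaklyWinning) {x y : V} (h : Reaches J.D x y) :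
    J.H y = J.H x := by
  induction h with
  | refl => rfl
  | tail _ e ih => exact (hEdge hw e).trans ih

lemma hPath (hw : J.WeaklyWinning) {π : ℕ → V} (hπ : IsInfPath J.D π) :
    ∀ k, J.H (π k) = J.H (π 0)
  | 0 => rfl
  | (k + 1) => (hEdge hw (hπ k)).trans (hPath hw hπ k)

lemma jl_le {x u : V} (h : u ∈ J.Par x) : J.jl x ≤ (G.pr u : ℕ∞) :=
  sInf_le ⟨u, h, rfl⟩

lemma jl_mono {x y : V} (h : Reaches J.D x y) : J.jl x ≤ J.jl y :=
  sInf_le_sInf (by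
    rintro _ ⟨u, hu, rfl⟩
    exact ⟨u, ⟨Relation.ReflTransGen.trans h hu.1, hu.2⟩, rfl⟩)

lemma jlDJ_le {p : V × V} (hp : p ∈ dj) : J.jlDJ dj ≤ J.jl p.2 :=
  sInf_le ⟨p, hp, rfl⟩

lemma Safe.pr_le (hs : J.Safe) {x u : V} (h : u ∈ J.Par x) : G.pr x ≤ G.pr u := by
  have h1 := hs.2.2 x
  have h2 : J.jl x ≤ (G.pr u : ℕ∞) := jl_le h
  exact_mod_cast h1.trans h2

lemma jl_le_self (h : ¬ J.Justified v) : J.jl v ≤ (G.pr v : ℕ∞) :=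
  jl_le ⟨Relation.ReflTransGen.refl, h⟩

lemma update_D_self {y : V} : (J.update v dj α).D v y ↔ (v, y) ∈ dj := by
  simp [update]

lemma update_D_ne {x y : V} (h : x ≠ v) : (J.update v dj α).D x y ↔ J.D x y := by
  simp [update, h]

lemma update_H_self : (J.update v dj α).H v = α := by simp [update]

lemma update_H_ne {x : V} (h : x ≠ v) : (J.update v dj α).H x = J.H x := by
  simp [update, h]

lemma resetAll_D {S : Set V} {Hf : V → Fin 2} {x y : V} (h : x ∉ S) :
    (J.resetAll S Hf).D x y ↔ J.D x y := by simp [resetAll, h]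

lemma resetAll_D_mem {S : Set V} {Hf : V → Fin 2} {x y : V} (h : x ∈ S) :
    ¬ (J.resetAll S Hf).D x y := by simp [resetAll, h]

lemma resetAll_H {S : Set V} {Hf : V → Fin 2} {x : V} (h : x ∉ S) :
    (J.resetAll S Hf).H x = J.H x := by simp [resetAll, h]

lemma resetAll_H_mem {S : Set V} {Hf : V → Fin 2} {x : V} (h : x ∈ S) :
    (J.resetAll S Hf).H x = Hf x := by simp [resetAll, h]

lemma update_outEdges (hfst : ∀ p ∈ dj, p.1 = v) :
    (J.update v dj α).outEdges v = dj := by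
  ext ⟨a, b⟩
  simp only [outEdges, Set.mem_setOf_eq, update_D_self]
  constructor
  · rintro ⟨rfl, h⟩; exact h
  · intro h
    have ha := hfst _ h
    refine ⟨ha, ?_⟩
    rw [← ha]; exact h

lemma update_outEdges_ne {x : V} (h : x ≠ v) :
    (J.update v dj α).outEdges x = J.outEdges x := by
  ext ⟨a, b⟩
  simp only [outEdges, Set.mem_setOf_eq]
  rw [update_D_ne h]

lemma resetAll_outEdges {S : Set V} {Hf : V → Fin 2} {x : V} (h : x ∉ S) :
    (J.resetAll S Hf).outEdges x = J.outEdges x := by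
  ext ⟨a, b⟩
  simp only [outEdges, Set.mem_setOf_eq]
  rw [resetAll_D h]

end Justification

lemma reaches_of_seg {D : V → V → Prop} {π : ℕ → V} {k l : ℕ} (hkl : k ≤ l)
    (h : ∀ t, k ≤ t → t < l → D (π t) (π (t + 1))) : Reaches D (π k) (π l) := by
  induction l, hkl using Nat.le_induction with
  | base => exact Relation.ReflTransGen.refl
  | succ l hkl ih =>
    exact Relation.ReflTransGen.tail
      (ih fun t ht htl => h t ht (htl.trans (Nat.lt_succ_self l)))
      (h l hkl (Nat.lt_succ_self l))

lemma infinite_setOf_shift {P : ℕ → Prop} (k : ℕ) (h : {i | P i}.Infinite) :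
    {i | P (i + k)}.Infinite := by
  have h2 : ({i | P i} \ Set.Iio k).Infinite := h.diff (Set.finite_Iio k)
  have hsub : ({i | P i} \ Set.Iio k) ⊆ (fun i => i + k) '' {i | P (i + k)} := by
    rintro i ⟨hPi, hik⟩
    simp only [Set.mem_Iio, not_lt] at hik
    exact ⟨i - k, by simpa [Nat.sub_add_cancel hik] using hPi, Nat.sub_add_cancel hik⟩
  exact Set.Infinite.of_image _ (h2.mono hsub)

lemma infinite_setOf_unshift {P : ℕ → Prop} (k : ℕ) (h : {i | P (i + k)}.Infinite) :
    {i | P i}.Infinite := by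
  have h2 := h.image ((add_left_injective k).injOn)
  exact h2.mono (by rintro _ ⟨i, hi, rfl⟩; exact hi)

lemma infWonBy_shift {π : ℕ → V} {α : Fin 2} (k : ℕ)
    (h : G.InfWonBy (fun i => π (i + k)) α) : G.InfWonBy π α := by
  obtain ⟨p, h1, h2, h3⟩ := h
  exact ⟨p, infinite_setOf_unshift k h1,
    fun q hq => h2 q (infinite_setOf_shift k hq), h3⟩

lemma exists_infinite_node [Fintype V] {π : ℕ → V} {q : ℕ}
    (h : {i | G.pr (π i) = q}.Infinite) :
    ∃ u, G.pr u = q ∧ {i | π i = u}.Infinite := by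
  by_contra hc
  push_neg at hc
  have hfin : ∀ u : V, {i | π i = u ∧ G.pr (π i) = q}.Finite := by
    intro u
    by_cases hq : G.pr u = q
    · have h1 := hc u hq
      exact h1.subset fun i hi => hi.1
    · refine Set.Finite.subset Set.finite_empty fun i hi => absurd ?_ hq
      rw [← hi.1]; exact hi.2
  have hsub : {i | G.pr (π i) = q} ⊆ ⋃ u : V, {i | π i = u ∧ G.pr (π i) = q} :=
    fun i hi => Set.mem_iUnion.2 ⟨π i, rfl, hi⟩
  exact h ((Set.finite_iUnion hfin).subset hsub)

end Aux

/-- if `Justify(J, v, dj)` is executable (`J` is safe, player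
`α` wins `v` by `dj` under `H`, and `jl(dj) ≥ jl(v)` if `v` is unjustified
while `jl(dj) > jl(v)` if `v` is justified), then the returned justification
is safe. -/
theorem stmt_12 {V : Type*} [Fintype V] {G : ParityGame V}
    (J : Justification G) (v : V) (dj : Set (V × V)) (α : Fin 2)
    (hsafe : J.Safe) (hwin : G.WinsDJ J.H v α dj)
    (hlev : if J.Justified v then J.jl v < J.jlDJ dj
            else J.jl v ≤ J.jlDJ dj) :
    (justify G J v dj α).Safe := by
  classical
  have hwinJ : J.Winning := hsafe.1
  have hdef : ∀ x, ¬ J.Justified x → J.H x = G.Hd x := hsafe.2.1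
  have hjl : ∀ x, (G.pr x : ℕ∞) ≤ J.jl x := hsafe.2.2
  have hww : J.WeaklyWinning := hwinJ.1
  have hdjne : dj.Nonempty := hwin.1.nonempty
  have hfst : ∀ p ∈ dj, p.1 = v := fun p hp => hwin.1.fst_eq hp
  have hjlv_dj : J.jl v ≤ J.jlDJ dj := by
    by_cases hj : J.Justified v
    · rw [if_pos hj] at hlev; exact hlev.le
    · rw [if_neg hj] at hlev; exact hlev
  by_cases hvα : J.H v = α
  · -- Case 1 : `H v = α`, the result is `J.update v dj α`.
    simp only [justify, if_pos hvα]
    set J' := J.update v dj α with hJ'def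
    have hH : J'.H = J.H := by
      funext x
      by_cases hx : x = v
      · rw [hx, Justification.update_H_self, hvα]
      · exact Justification.update_H_ne hx
    have hDv : ∀ y, J'.D v y ↔ (v, y) ∈ dj := fun y => Justification.update_D_self
    have hDx : ∀ x y, x ≠ v → (J'.D x y ↔ J.D x y) :=
      fun x y hx => Justification.update_D_ne hx
    have hjustv : J'.Justified v := by
      obtain ⟨⟨a, b⟩, hp⟩ := hdjne
      have ha : a = v := hfst _ hp
      exact ⟨b, (hDv b).2 (by rw [← ha]; exact hp)⟩
    have houtv : J'.outEdges v = dj := Justification.update_outEdges hfst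
    -- weak winning
    have hww' : J'.WeaklyWinning := by
      intro x hx
      by_cases hxv : x = v
      · subst hxv
        rw [houtv, hH, hvα]
        exact hwin
      · rw [Justification.update_outEdges_ne hxv, hH]
        refine hww x ?_
        obtain ⟨w, hw⟩ := hx
        exact ⟨w, (hDx x w hxv).1 hw⟩
    -- infinite paths
    have hwinning : ∀ π : ℕ → V, IsInfPath J'.D π → G.InfWonBy π (J'.H (π 0)) := by
      intro π hπ
      by_cases hinf : {i | π i = v}.Infinite
      · by_cases hjv : J.Justified v
        · -- impossible: a cycle through `v` contradicts `jl v < jlDJ dj`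
          exfalso
          rw [if_pos hjv] at hlev
          obtain ⟨i, hi⟩ := hinf.nonempty
          simp only [Set.mem_setOf_eq] at hi
          obtain ⟨j, hj2, hij⟩ := hinf.exists_gt i
          simp only [Set.mem_setOf_eq] at hj2
          have hex : ∃ t, i < t ∧ π t = v := ⟨j, hij, hj2⟩
          obtain ⟨hij0, hπj0⟩ := Nat.find_spec hex
          have hdj : (v, π (i + 1)) ∈ dj := by
            have e := hπ i
            rw [hi] at e
            exact (hDv _).1 e
          have hreach : Reaches J.D (π (i + 1)) (π (Nat.find hex)) := by
            refine reaches_of_seg (Nat.succ_le_of_lt hij0) fun t ht htj => ?_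
            have hne : π t ≠ v := fun hv2 =>
              Nat.find_min hex htj ⟨Nat.lt_of_succ_le ht, hv2⟩
            exact (hDx _ _ hne).1 (hπ t)
          have h1 : J.jlDJ dj ≤ J.jl (π (i + 1)) := Justification.jlDJ_le hdj
          have h2 : J.jl (π (i + 1)) ≤ J.jl (π (Nat.find hex)) :=
            Justification.jl_mono hreach
          rw [hπj0] at h2
          exact absurd (lt_of_lt_of_le hlev (h1.trans h2)) (lt_irrefl _)
        · -- `v` unjustified: the maximal recurring priority is `pr v`, of parity `α`
          rw [if_neg hjv] at hlev
          have hHv : J.H v = G.Hd v := hdef v hjv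
          have hα : ((G.pr v : ℕ) : Fin 2) = α := by rw [← hvα, hHv]; rfl
          have hH0 : J'.H (π 0) = α := by
            obtain ⟨i, hi⟩ := hinf.nonempty
            simp only [Set.mem_setOf_eq] at hi
            have hp := Justification.hPath hww' hπ i
            rw [hi] at hp
            rw [← hp, hJ'def, Justification.update_H_self]
          rw [hH0]
          refine ⟨G.pr v, ?_, ?_, hα⟩
          · refine hinf.mono fun i hi => ?_
            simp only [Set.mem_setOf_eq] at *
            rw [hi]
          · intro q hq
            obtain ⟨u, hpru, huinf⟩ := exists_infinite_node hq
            by_cases huv : u = v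
            · rw [← hpru, huv]
            · obtain ⟨i, hi⟩ := huinf.nonempty
              simp only [Set.mem_setOf_eq] at hi
              obtain ⟨j, hj2, hij⟩ := hinf.exists_gt i
              simp only [Set.mem_setOf_eq] at hj2
              have hex : ∃ t, i < t ∧ π t = v := ⟨j, hij, hj2⟩
              obtain ⟨hij0, hπj0⟩ := Nat.find_spec hex
              have hreach : Reaches J.D (π i) (π (Nat.find hex)) := by
                refine reaches_of_seg hij0.le fun t ht htj => ?_
                have hne : π t ≠ v := by
                  rcases eq_or_lt_of_le ht with rfl | hlt
                  · rw [hi]; exact huv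
                  · exact fun hv2 => Nat.find_min hex htj ⟨hlt, hv2⟩
                exact (hDx _ _ hne).1 (hπ t)
              rw [hπj0, hi] at hreach
              have hle : G.pr u ≤ G.pr v :=
                Justification.Safe.pr_le hsafe ⟨hreach, hjv⟩
              rwa [hpru] at hle
      · -- `v` occurs finitely often: the tail is a path in `J.D`
        rw [Set.not_infinite] at hinf
        obtain ⟨N, hN⟩ := hinf.bddAbove
        have hne : ∀ i, π (i + (N + 1)) ≠ v := by
          intro i hiv
          have h1 : i + (N + 1) ≤ N := hN hiv
          omega
        have hpath : IsInfPath J.D (fun i => π (i + (N + 1))) := by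
          intro i
          have e := hπ (i + (N + 1))
          have h2 := (hDx _ _ (hne i)).1 e
          have h3 : i + 1 + (N + 1) = i + (N + 1) + 1 := by omega
          show J.D (π (i + (N + 1))) (π (i + 1 + (N + 1)))
          rw [h3]
          exact h2
        have hwon := hwinJ.2 _ hpath
        have hH0 : J.H (π (0 + (N + 1))) = J'.H (π 0) := by
          rw [← hH]
          exact Justification.hPath hww' hπ (0 + (N + 1))
        rw [hH0] at hwon
        exact infWonBy_shift (N + 1) hwon
    -- unjustified nodes of `J'`
    have hunj' : ∀ x, ¬ J'.Justified x → x ≠ v ∧ ¬ J.Justified x := by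
      intro x hx
      have hxv : x ≠ v := by rintro rfl; exact hx hjustv
      refine ⟨hxv, fun h => hx ?_⟩
      obtain ⟨w, hw⟩ := h
      exact ⟨w, (hDx x w hxv).2 hw⟩
    -- reachability in `J'.D`
    have claimA : ∀ x u, Reaches J'.D x u →
        Reaches J.D x u ∨ (Reaches J.D x v ∧ ∃ w, (v, w) ∈ dj ∧ Reaches J.D w u) := by
      intro x u h
      induction h using Relation.ReflTransGen.head_induction_on with
      | refl => exact Or.inl Relation.ReflTransGen.refl
      | @head a c e hcu ih =>
        by_cases hav : a = v
        · subst hav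
          have hdc : (a, c) ∈ dj := (hDv c).1 e
          refine Or.inr ⟨Relation.ReflTransGen.refl, ?_⟩
          rcases ih with h1 | ⟨h2, w, hw, h3⟩
          · exact ⟨c, hdc, h1⟩
          · exact ⟨w, hw, h3⟩
        · have he : J.D a c := (hDx a c hav).1 e
          rcases ih with h1 | ⟨h2, w, hw, h3⟩
          · exact Or.inl (Relation.ReflTransGen.head he h1)
          · exact Or.inr ⟨Relation.ReflTransGen.head he h2, w, hw, h3⟩
    have cond3 : ∀ x, (G.pr x : ℕ∞) ≤ J'.jl x := by
      intro x
      simp only [Justification.jl, Justification.Par]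
      refine le_sInf ?_
      rintro b ⟨u, hu, rfl⟩
      simp only [Set.mem_setOf_eq] at hu
      obtain ⟨hreach, hunj⟩ := hu
      show (G.pr x : ℕ∞) ≤ (G.pr u : ℕ∞)
      obtain ⟨huv, hunjJ⟩ := hunj' u hunj
      rcases claimA x u hreach with h1 | ⟨h2, w, hw, h3⟩
      · exact_mod_cast Justification.Safe.pr_le hsafe ⟨h1, hunjJ⟩
      · have hxv : (G.pr x : ℕ∞) ≤ J.jl v := by
          refine le_sInf ?_
          rintro b ⟨z, hz, rfl⟩
          have hz2 : z ∈ J.Par x := ⟨Relation.ReflTransGen.trans h2 hz.1, hz.2⟩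
          show (G.pr x : ℕ∞) ≤ (G.pr z : ℕ∞)
          exact_mod_cast Justification.Safe.pr_le hsafe hz2
        exact hxv.trans (hjlv_dj.trans ((Justification.jlDJ_le hw).trans
          (Justification.jl_le ⟨h3, hunjJ⟩)))
    have cond2 : ∀ x, ¬ J'.Justified x → J'.H x = G.Hd x := by
      intro x hx
      obtain ⟨hxv, hunjJ⟩ := hunj' x hx
      rw [hH]
      exact hdef x hunjJ
    exact ⟨⟨hww', hwinning⟩, cond2, cond3⟩
  · -- Case 2 : `H v ≠ α`, all nodes reaching `v` are reset.
    simp only [justify, if_neg hvα]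
    set S := {w | Reaches J.D w v} with hSdef
    set J' := (J.resetAll S G.Hd).update v dj α with hJ'def
    have hSv : v ∈ S := Relation.ReflTransGen.refl
    have hDv : ∀ y, J'.D v y ↔ (v, y) ∈ dj := fun y => Justification.update_D_self
    have hDxS : ∀ x y, x ≠ v → x ∈ S → ¬ J'.D x y := by
      intro x y hxv hxS h
      rw [Justification.update_D_ne hxv] at h
      exact Justification.resetAll_D_mem hxS h
    have hDx : ∀ x y, x ≠ v → x ∉ S → (J'.D x y ↔ J.D x y) := fun x y hxv hxS =>
      (Justification.update_D_ne hxv).trans (Justification.resetAll_D hxS)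
    have hHx : ∀ x, x ≠ v → x ∉ S → J'.H x = J.H x := fun x hxv hxS =>
      (Justification.update_H_ne hxv).trans (Justification.resetAll_H hxS)
    have hHS : ∀ x, x ≠ v → x ∈ S → J'.H x = G.Hd x := fun x hxv hxS =>
      (Justification.update_H_ne hxv).trans (Justification.resetAll_H_mem hxS)
    have hHv : J'.H v = α := Justification.update_H_self
    have hclosed : ∀ x y, J.D x y → y ∈ S → x ∈ S := fun x y hxy hyS =>
      Relation.ReflTransGen.head hxy hyS
    have hDtoV : ∀ x, J.D x v → x ∈ S := fun x h => Relation.ReflTransGen.single h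
    have htarget : ∀ p ∈ dj, p.2 ∉ S := by
      intro p hp hpS
      have h1 : J.H v = J.H p.2 := Justification.hReaches hww hpS
      rw [hwin.2 p hp] at h1
      exact hvα h1
    have htargetv : ∀ p ∈ dj, p.2 ≠ v := fun p hp h =>
      htarget p hp (by rw [h]; exact hSv)
    have hjustv : J'.Justified v := by
      obtain ⟨⟨a, b⟩, hp⟩ := hdjne
      have ha : a = v := hfst _ hp
      exact ⟨b, (hDv b).2 (by rw [← ha]; exact hp)⟩
    have houtv : J'.outEdges v = dj := Justification.update_outEdges hfst
    -- weak winning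
    have hww' : J'.WeaklyWinning := by
      intro x hx
      by_cases hxv : x = v
      · subst hxv
        rw [houtv, hHv]
        refine ⟨hwin.1, fun p hp => ?_⟩
        rw [hHx p.2 (htargetv p hp) (htarget p hp)]
        exact hwin.2 p hp
      · by_cases hxS : x ∈ S
        · obtain ⟨w, hw⟩ := hx
          exact absurd hw (hDxS x w hxv hxS)
        · have hjx : J.Justified x := by
            obtain ⟨w, hw⟩ := hx
            exact ⟨w, (hDx x w hxv hxS).1 hw⟩
          rw [Justification.update_outEdges_ne hxv, Justification.resetAll_outEdges hxS,
            hHx x hxv hxS]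
          obtain ⟨hdj1, hdj2⟩ := hww x hjx
          refine ⟨hdj1, fun p hp => ?_⟩
          obtain ⟨hp1, hp2⟩ := hp
          have hyS : p.2 ∉ S := fun h => hxS (hclosed x p.2 hp2 h)
          have hyv : p.2 ≠ v := fun h => hxS (hDtoV x (by rwa [h] at hp2))
          rw [hHx p.2 hyv hyS]
          exact hdj2 p ⟨hp1, hp2⟩
    -- infinite paths
    have hwinning : ∀ π : ℕ → V, IsInfPath J'.D π → G.InfWonBy π (J'.H (π 0)) := by
      intro π hπ
      have hne : ∀ i, π (i + 1) ≠ v := by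
        intro i hv1
        have e := hπ i
        by_cases hiv : π i = v
        · rw [hiv] at e
          have hd : (v, π (i + 1)) ∈ dj := (hDv _).1 e
          exact htarget _ hd (by rw [hv1]; exact hSv)
        · by_cases hiS : π i ∈ S
          · exact hDxS _ _ hiv hiS e
          · have hd : J.D (π i) (π (i + 1)) := (hDx _ _ hiv hiS).1 e
            rw [hv1] at hd
            exact hiS (hDtoV _ hd)
      have hnS : ∀ i, π (i + 1) ∉ S := fun i hiS =>
        hDxS _ _ (hne i) hiS (hπ (i + 1))
      have hpath : IsInfPath J.D (fun i => π (i + 1)) := by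
        intro i
        exact (hDx _ _ (hne i) (hnS i)).1 (hπ (i + 1))
      have hwon := hwinJ.2 _ hpath
      have hH0 : J.H (π (0 + 1)) = J'.H (π 0) :=
        (hHx (π (0 + 1)) (hne 0) (hnS 0)).symm.trans
          (Justification.hPath hww' hπ (0 + 1))
      rw [hH0] at hwon
      exact infWonBy_shift 1 hwon
    -- reachability in `J'.D`
    have claimB : ∀ x u, Reaches J'.D x u →
        (Reaches J.D x u ∧ (u ∈ S → x = u)) ∨
        (x = v ∧ u ∉ S ∧ ∃ w, (v, w) ∈ dj ∧ Reaches J.D w u) := by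
      intro x u h
      induction h using Relation.ReflTransGen.head_induction_on with
      | refl => exact Or.inl ⟨Relation.ReflTransGen.refl, fun _ => rfl⟩
      | @head a c e hcu ih =>
        by_cases hav : a = v
        · subst hav
          have hdc : (a, c) ∈ dj := (hDv c).1 e
          have hcS : c ∉ S := htarget (a, c) hdc
          rcases ih with ⟨h1, h2⟩ | ⟨hcv, _, _⟩
          · have huS : u ∉ S := fun h => hcS (by rw [h2 h]; exact h)
            exact Or.inr ⟨rfl, huS, c, hdc, h1⟩
          · exact absurd (by rw [hcv]; exact hSv) hcS
        · have haS : a ∉ S := fun haS => hDxS a c hav haS e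
          have he : J.D a c := (hDx a c hav haS).1 e
          rcases ih with ⟨h1, h2⟩ | ⟨hcv, _⟩
          · refine Or.inl ⟨Relation.ReflTransGen.head he h1, fun huS =>
              absurd (hclosed a c he (by rw [h2 huS]; exact huS)) haS⟩
          · subst hcv
            exact absurd (hDtoV a he) haS
    have cond3 : ∀ x, (G.pr x : ℕ∞) ≤ J'.jl x := by
      intro x
      simp only [Justification.jl, Justification.Par]
      refine le_sInf ?_
      rintro b ⟨u, hu, rfl⟩
      simp only [Set.mem_setOf_eq] at hu
      obtain ⟨hreach, hunj⟩ := hu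
      show (G.pr x : ℕ∞) ≤ (G.pr u : ℕ∞)
      have huv : u ≠ v := by rintro rfl; exact hunj hjustv
      rcases claimB x u hreach with ⟨h1, h2⟩ | ⟨hxveq, huS, w, hw, h3⟩
      · by_cases huS : u ∈ S
        · rw [h2 huS]
        · have hunjJ : ¬ J.Justified u := by
            rintro ⟨w, hw⟩
            exact hunj ⟨w, (hDx u w huv huS).2 hw⟩
          exact_mod_cast Justification.Safe.pr_le hsafe ⟨h1, hunjJ⟩
      · have hunjJ : ¬ J.Justified u := by
          rintro ⟨w', hw'⟩
          exact hunj ⟨w', (hDx u w' huv huS).2 hw'⟩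
        rw [hxveq]
        exact (hjl v).trans (hjlv_dj.trans ((Justification.jlDJ_le hw).trans
          (Justification.jl_le ⟨h3, hunjJ⟩)))
    have cond2 : ∀ x, ¬ J'.Justified x → J'.H x = G.Hd x := by
      intro x hx
      have hxv : x ≠ v := by rintro rfl; exact hx hjustv
      by_cases hxS : x ∈ S
      · exact hHS x hxv hxS
      · rw [hHx x hxv hxS]
        refine hdef x fun h => ?_
        obtain ⟨w, hw⟩ := h
        exact hx ⟨w, (hDx x w hxv hxS).2 hw⟩
    exact ⟨⟨hww', hwinning⟩, cond2, cond3⟩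

end ParityGame

end
end

section
/- Let J = (V, D, H) be a winning justification for a parity game PG in which every node is justified. Then H is the winning function of PG: for every node v, player H(v) wins v in PG, and σ_{J,H(v)} is a winning strategy for v. -/
attribute [local instance] Classical.propDecidable

open Fin.NatCast

noncomputable section

namespace ParityGame

variable {V : Type*}

variable {G : ParityGame V}

/-- if `J` is a winning justification in which every node is
justified, then `H` is the winning function of the parity game `G`: for
every node `v`, every play of `G` starting in `v` and consistent with
`σ_{J, H v}` is won by `H v`, i.e. `σ_{J, H v}` is a winning strategy for
`v` for player `H v`. -/
theorem stmt_17 {V : Type*} [Fintype V] {G : ParityGame V}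
    (J : Justification G) (hJ : J.Winning) (hall : ∀ v, J.Justified v) :
    ∀ (v : V) (π : ℕ → V), π 0 = v → IsInfPath G.E π →
      Consistent (J.strat (J.H v)) π → G.InfWonBy π (J.H v) := by
  intro v π hπ0 hπE hcons
  have step : ∀ i, J.H (π i) = J.H v →
      J.D (π i) (π (i+1)) ∧ J.H (π (i+1)) = J.H v := by
    intro i Hi
    obtain ⟨⟨hown, hnown⟩, hall2⟩ := hJ.1 (π i) (hall (π i))
    by_cases ho : G.owner (π i) = J.H (π i)
    · obtain ⟨w, hEw, hout⟩ := hown ho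
      have hDw : J.D (π i) w := by
        have : ((π i), w) ∈ J.outEdges (π i) := by rw [hout]; rfl
        exact this.2
      have hπw : π (i+1) = w := hcons i w ⟨hDw, Hi ▸ ho, Hi⟩
      refine ⟨hπw ▸ hDw, ?_⟩
      have hw := hall2 ((π i), w) (by rw [hout]; rfl)
      rw [hπw, hw, Hi]
    · have hout := hnown ho
      have hmem : ((π i), π (i+1)) ∈ J.outEdges (π i) := by
        rw [hout]; exact ⟨rfl, hπE i⟩
      refine ⟨hmem.2, ?_⟩
      have := hall2 _ hmem
      rw [this, Hi]
  have key : ∀ i, J.H (π i) = J.H v ∧ J.D (π i) (π (i+1)) := by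
    intro i
    induction i with
    | zero => exact ⟨hπ0 ▸ rfl, (step 0 (hπ0 ▸ rfl)).1⟩
    | succ n ih => exact ⟨(step n ih.1).2, (step (n+1) (step n ih.1).2).1⟩
  have hpath : IsInfPath J.D π := fun i => (key i).2
  have := hJ.2 π hpath
  rwa [(key 0).1] at this

end ParityGame

end
end
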